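/- arXiv:1504.05499 — 2 statements merged into one kernel-verified Lean document; each statement's English description precedes it below -/
import Mathlib

section
/- The Carlitz q-Bernoulli polynomials satisfy the addition formula β_{n,q}(x+y) = ∑_{l=0}^{n} C(n,l) q^{lx} [x]_q^{n-l} β_{l,q}(y) for all natural numbers (or reals, with real powers) x and y. -/
/-- The real `q`-analogue `[x]_q = (1 - q^x)/(1 - q)` using real powers. -/
noncomputable def qReal (q x : ℝ) : ℝ := (1 - q ^ x) / (1 - q)

/-- The Carlitz `q`-Bernoulli polynomial
`β_{n,q}(x) = ∑_{l=0}^n C(n,l) q^{lx} [x]_q^{n-l} β_l` (real `x`, real powers). -/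
noncomputable def qBernoulliPoly (q : ℝ) (β : ℕ → ℝ) (n : ℕ) (x : ℝ) : ℝ :=
  ∑ l ∈ Finset.range (n + 1), (n.choose l : ℝ) * q ^ ((l : ℝ) * x) * (qReal q x) ^ (n - l) * β l

theorem qBernoulli_addition (q : ℝ) (hq : 0 < q) (hq1 : q ≠ 1)
    (β : ℕ → ℝ) (hβ0 : β 0 = 1)
    (hrec : ∀ n : ℕ, 1 ≤ n →
      q * ∑ k ∈ Finset.range (n + 1), (n.choose k : ℝ) * q ^ k * β k - β n =
        if n = 1 then 1 else 0)
    (n : ℕ) (x y : ℝ) :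
    qBernoulliPoly q β n (x + y) =
      ∑ l ∈ Finset.range (n + 1),
        (n.choose l : ℝ) * q ^ ((l : ℝ) * x) * (qReal q x) ^ (n - l) * qBernoulliPoly q β l y := by
  have h1q : (1 : ℝ) - q ≠ 0 := sub_ne_zero.mpr (Ne.symm hq1)
  have hqadd : qReal q (x + y) = q ^ x * qReal q y + qReal q x := by
    unfold qReal
    rw [Real.rpow_add hq]
    field_simp
    ring
  set S : ℝ := ∑ l ∈ Finset.range (n + 1), ∑ j ∈ Finset.range (n + 1 - l),
      (n.choose l : ℝ) * ((n - l).choose j : ℝ) * q ^ ((l : ℝ) * x) * q ^ ((j : ℝ) * x) *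
        (qReal q x) ^ (n - l - j) * q ^ ((l : ℝ) * y) * (qReal q y) ^ j * β l with hS
  have hL : qBernoulliPoly q β n (x + y) = S := by
    unfold qBernoulliPoly
    refine Finset.sum_congr rfl fun l hl => ?_
    have hl' : l ≤ n := Nat.lt_succ_iff.mp (Finset.mem_range.mp hl)
    rw [hqadd, add_pow, Finset.mul_sum, Finset.sum_mul]
    have hrange : n - l + 1 = n + 1 - l := by omega
    rw [hrange]
    refine Finset.sum_congr rfl fun j hj => ?_
    have e1 : q ^ ((l : ℝ) * (x + y)) = q ^ ((l : ℝ) * x) * q ^ ((l : ℝ) * y) := by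
      rw [mul_add, Real.rpow_add hq]
    have e2 : (q ^ x) ^ j = q ^ ((j : ℝ) * x) := by
      rw [← Real.rpow_natCast (q ^ x) j, ← Real.rpow_mul hq.le, mul_comm]
    rw [e1, mul_pow, e2]
    ring
  have hR : (∑ l ∈ Finset.range (n + 1),
      (n.choose l : ℝ) * q ^ ((l : ℝ) * x) * (qReal q x) ^ (n - l) * qBernoulliPoly q β l y) = S := by
    have step1 : (∑ m ∈ Finset.range (n + 1),
        (n.choose m : ℝ) * q ^ ((m : ℝ) * x) * (qReal q x) ^ (n - m) * qBernoulliPoly q β m y)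
        = ∑ m ∈ Finset.range (n + 1), ∑ l ∈ Finset.range (m + 1),
            (n.choose m : ℝ) * q ^ ((m : ℝ) * x) * (qReal q x) ^ (n - m) *
              ((m.choose l : ℝ) * q ^ ((l : ℝ) * y) * (qReal q y) ^ (m - l) * β l) := by
      refine Finset.sum_congr rfl fun m _ => ?_
      rw [qBernoulliPoly, Finset.mul_sum]
    rw [step1]
    have step2 : ∀ (f : ℕ → ℕ → ℝ),
        (∑ m ∈ Finset.range (n + 1), ∑ l ∈ Finset.range (m + 1), f l m)
          = ∑ l ∈ Finset.range (n + 1), ∑ m ∈ Finset.Ico l (n + 1), f l m := by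
      intro f
      simp only [Finset.range_eq_Ico]
      exact (Finset.sum_Ico_Ico_comm 0 (n + 1) f).symm
    rw [step2]
    refine Finset.sum_congr rfl fun l hl => ?_
    have hl' : l ≤ n := Nat.lt_succ_iff.mp (Finset.mem_range.mp hl)
    rw [Finset.sum_Ico_eq_sum_range]
    have hrange : n + 1 - l = n - l + 1 := by omega
    rw [show n + 1 - l = n + 1 - l from rfl]
    refine Finset.sum_congr rfl fun j hj => ?_
    have hj' : j ≤ n - l := by
      have := Finset.mem_range.mp hj; omega
    have hkn : l + j ≤ n := by omega
    have hcn : n.choose (l + j) * (l + j).choose l = n.choose l * (n - l).choose j := by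
      rw [Nat.choose_mul (n := n) (Nat.le_add_right l j), Nat.add_sub_cancel_left]
    have hcr : (n.choose (l + j) : ℝ) * ((l + j).choose l : ℝ)
        = (n.choose l : ℝ) * ((n - l).choose j : ℝ) := by exact_mod_cast hcn
    have e3 : q ^ (((l + j : ℕ) : ℝ) * x) = q ^ ((l : ℝ) * x) * q ^ ((j : ℝ) * x) := by
      push_cast
      rw [add_mul, Real.rpow_add hq]
    have e4 : n - (l + j) = n - l - j := by omega
    have e5 : l + j - l = j := by omega
    rw [e3, e4, e5]
    linear_combination (q ^ ((l : ℝ) * x) * q ^ ((j : ℝ) * x) * (qReal q x) ^ (n - l - j) *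
      q ^ ((l : ℝ) * y) * (qReal q y) ^ j * β l) * hcr
  exact hL.trans hR.symm
end

section
/- As q → 1 (real q, 0 < q < 1), the Carlitz q-Bernoulli number β_{n,q} tends to the classical Bernoulli number B_n for every natural number n. -/
open Polynomial Finset

noncomputable def chP (e : ℕ) : Polynomial ℝ := Polynomial.C ((e.factorial : ℝ))⁻¹ * descPochhammer ℝ e

lemma chP_eval (e i : ℕ) : (chP e).eval (i : ℝ) = (i.choose e : ℝ) := by
  have h := descPochhammer_eval_eq_descFactorial ℝ i e
  have h2 : (i.descFactorial e : ℝ) = (e.factorial : ℝ) * (i.choose e : ℝ) := by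
    rw [Nat.descFactorial_eq_factorial_mul_choose]; push_cast; ring
  have he : (e.factorial : ℝ) ≠ 0 := by exact_mod_cast e.factorial_ne_zero
  simp [chP, h, h2]
  field_simp

lemma chP_natDegree (e : ℕ) : (chP e).natDegree ≤ e := by
  refine (natDegree_C_mul_le _ _).trans ?_
  rw [descPochhammer_natDegree]


noncomputable def carP : ℕ → Polynomial ℝ
  | 0 => 1
  | (d+1) => -∑ e ∈ Finset.range (d+1), Polynomial.C (((e:ℝ)+2))⁻¹ * (chP (e+1) * carP (d - e))
  termination_by d => d
  decreasing_by exact Nat.lt_succ_of_le (Nat.sub_le d e)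

lemma carP_natDegree (d : ℕ) : (carP d).natDegree ≤ d := by
  induction d using Nat.strong_induction_on with
  | _ d ih =>
    match d with
    | 0 => simp [carP]
    | (d+1) =>
      rw [carP, natDegree_neg]
      refine natDegree_sum_le_of_forall_le _ _ fun e he => ?_
      refine (natDegree_mul_le).trans ?_
      have h1 : (chP (e+1)).natDegree ≤ e + 1 := by
        refine (natDegree_C_mul_le _ _).trans ?_
        rw [descPochhammer_natDegree]
      have h2 : (carP (d - e)).natDegree ≤ d - e :=
        ih _ (Nat.lt_succ_of_le (Nat.sub_le d e))
      have h3 := natDegree_mul_le (p := chP (e+1)) (q := carP (d - e))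
      simp only [natDegree_C, zero_add]
      refine h3.trans ?_
      have : e < d + 1 := by simpa using he
      omega


lemma carP_conv (i d : ℕ) :
    ∑ e ∈ Finset.range (d+1), (((i+1).choose (e+1) : ℝ)) * (carP (d-e)).eval (i:ℝ)
      = (if d = 0 then ((i:ℝ)+1) else 0) := by
  match d with
  | 0 => simp [carP]
  | (d+1) =>
    rw [Finset.sum_range_succ']
    have hkey : ∀ e : ℕ, (((i+1).choose (e+2) : ℝ)) * ((e:ℝ)+2) = ((i:ℝ)+1) * (i.choose (e+1) : ℝ) := by
      intro e
      have := Nat.add_one_mul_choose_eq i (e+1)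
      have := congrArg (fun x : ℕ => (x : ℝ)) this
      push_cast at this
      push_cast
      linarith [this]
    have heval : (carP (d+1)).eval (i:ℝ)
        = -∑ e ∈ Finset.range (d+1), ((e:ℝ)+2)⁻¹ * ((i.choose (e+1) : ℝ) * (carP (d-e)).eval (i:ℝ)) := by
      rw [carP]
      rw [eval_neg, eval_finset_sum]
      congr 1
      refine Finset.sum_congr rfl fun e he => ?_
      rw [eval_mul, eval_mul, eval_C, chP_eval]
    have hz : ∀ e ∈ Finset.range (d+1),
        (((i+1).choose (e+1+1) : ℝ)) * (carP (d+1-(e+1))).eval (i:ℝ)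
        = (((i:ℝ)+1) * (((e:ℝ)+2)⁻¹ * ((i.choose (e+1) : ℝ) * (carP (d-e)).eval (i:ℝ)))) := by
      intro e he
      have hde : d + 1 - (e+1) = d - e := by omega
      rw [hde]
      have h2 : ((e:ℝ)+2) ≠ 0 := by positivity
      rw [show (((i:ℝ)+1) * (((e:ℝ)+2)⁻¹ * ((i.choose (e+1) : ℝ) * (carP (d-e)).eval (i:ℝ))))
          = (((i:ℝ)+1) * (i.choose (e+1) : ℝ)) * (((e:ℝ)+2)⁻¹ * (carP (d-e)).eval (i:ℝ)) by ring,
        ← hkey]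
      field_simp
    rw [Finset.sum_congr rfl hz, ← Finset.mul_sum]
    simp only [Nat.sub_zero, Nat.choose_one_right, if_neg (by omega : ¬ (d+1 = 0))]
    rw [heval, Nat.choose_one_right]
    push_cast
    ring


lemma alt_sum_poly (n : ℕ) : ∀ p : Polynomial ℝ, p.natDegree < n →
    ∑ i ∈ Finset.range (n+1), (-1:ℝ)^i * (n.choose i : ℝ) * p.eval (i:ℝ) = 0 := by
  induction n with
  | zero => intro p hp; omega
  | succ n ih =>
    intro p hp
    set q : Polynomial ℝ := p.comp (X + 1) - p with hq
    have hqeval : ∀ x : ℝ, q.eval x = p.eval (x+1) - p.eval x := by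
      intro x; simp [hq, eval_comp]
    have hchoosetop : ((n.choose (n+1)) : ℝ) = 0 := by
      rw [Nat.choose_eq_zero_of_lt (by omega)]; simp
    have hsplit : ∑ i ∈ Finset.range (n+2), (-1:ℝ)^i * ((n+1).choose i : ℝ) * p.eval (i:ℝ)
        = -∑ i ∈ Finset.range (n+1), (-1:ℝ)^i * (n.choose i : ℝ) * q.eval (i:ℝ) := by
      rw [Finset.sum_range_succ' (fun i => (-1:ℝ)^i * ((n+1).choose i : ℝ) * p.eval (i:ℝ)) (n+1)]
      have e1 : ∀ i ∈ Finset.range (n+1),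
          (-1:ℝ)^(i+1) * (((n+1).choose (i+1)) : ℝ) * p.eval ((i+1:ℕ):ℝ)
          = ((-1:ℝ)^(i+1) * ((n.choose (i+1)) : ℝ) * p.eval (((i+1:ℕ)):ℝ))
            + (-((-1:ℝ)^i * ((n.choose i) : ℝ) * p.eval (((i:ℝ))+1))) := by
        intro i hi
        have := Nat.choose_succ_succ n i
        push_cast [this]
        ring
      rw [Finset.sum_congr rfl e1, Finset.sum_add_distrib]
      have e2 : ∑ i ∈ Finset.range (n+1), ((-1:ℝ)^(i+1) * ((n.choose (i+1)) : ℝ) * p.eval (((i+1:ℕ)):ℝ))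
          = ∑ i ∈ Finset.range (n+2), ((-1:ℝ)^i * ((n.choose i) : ℝ) * p.eval ((i:ℕ):ℝ))
            - ((-1:ℝ)^0 * ((n.choose 0) : ℝ) * p.eval ((0:ℕ):ℝ)) := by
      
        rw [Finset.sum_range_succ' (fun i => (-1:ℝ)^i * ((n.choose i) : ℝ) * p.eval ((i:ℕ):ℝ)) (n+1)]
        ring
      rw [e2, Finset.sum_range_succ, hchoosetop]
      have : ∀ i ∈ Finset.range (n+1), (-((-1:ℝ)^i * ((n.choose i) : ℝ) * p.eval (((i:ℝ))+1)))
          = -((-1:ℝ)^i * ((n.choose i) : ℝ) * q.eval ((i:ℝ))) - ((-1:ℝ)^i * ((n.choose i) : ℝ) * p.eval ((i:ℝ))) := by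
        intro i hi
        rw [hqeval]; ring
      rw [Finset.sum_congr rfl this, Finset.sum_sub_distrib]
      simp only [Nat.cast_zero, pow_zero, Nat.choose_zero_right, Nat.cast_one, one_mul, Finset.sum_neg_distrib]
      push_cast
      ring
    rw [hsplit]
    rcases eq_or_ne q 0 with h0 | h0
    · simp [h0]
    · have hp0 : p ≠ 0 := by
        intro h; apply h0; simp [hq, h]
    
      have hx1 : (X + 1 : Polynomial ℝ).natDegree = 1 := by
        simpa using natDegree_X_add_C (1:ℝ)
      have hcompnd : (p.comp (X+1)).natDegree = p.natDegree := by
        rw [natDegree_comp, hx1, mul_one]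
      have hcomp0 : p.comp (X+1) ≠ 0 := by
        intro h
        have := leadingCoeff_comp (p := p) (q := X + 1) (by rw [hx1]; omega)
        rw [h] at this
        simp only [leadingCoeff_zero] at this
        have hlc : p.leadingCoeff ≠ 0 := leadingCoeff_ne_zero.mpr hp0
        have hlcx : (X + 1 : Polynomial ℝ).leadingCoeff = 1 := by
          simpa using (monic_X_add_C (1:ℝ)).leadingCoeff
        rw [hlcx, one_pow, mul_one] at this
        exact hlc this.symm
      have hdeg : q.degree < p.degree := by
        have h1 : (p.comp (X+1)).degree = p.degree := by
          rw [degree_eq_natDegree hcomp0, degree_eq_natDegree hp0, hcompnd]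
      
        have h2 : (p.comp (X+1)).leadingCoeff = p.leadingCoeff := by
          rw [leadingCoeff_comp (by rw [hx1]; omega)]
          have hlcx : (X + 1 : Polynomial ℝ).leadingCoeff = 1 := by
            simpa using (monic_X_add_C (1:ℝ)).leadingCoeff
          rw [hlcx, one_pow, mul_one]
        have := degree_sub_lt h1 hcomp0 h2
        rwa [← hq, h1] at this
      have hnd : q.natDegree < n := by
        have := Polynomial.natDegree_lt_natDegree h0 hdeg
        omega
      rw [ih q hnd, neg_zero]


noncomputable def aP (m : ℕ) : Polynomial ℝ :=
  ∑ d ∈ Finset.range m, Polynomial.C ((m.choose (d+1)):ℝ) * X^d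

lemma aP_coeff (m e : ℕ) : (aP m).coeff e = (m.choose (e+1) : ℝ) := by
  rw [aP, finset_sum_coeff]
  simp only [coeff_C_mul, coeff_X_pow]
  rcases lt_or_ge e m with h | h
  · rw [Finset.sum_eq_single e]
    · simp
    · intro b hb hbe; simp [Ne.symm hbe]
    · intro h2; exact absurd (Finset.mem_range.mpr h) h2
  · rw [Finset.sum_eq_zero, Nat.choose_eq_zero_of_lt (by omega)]
    · simp
    · intro b hb
      have : b < m := Finset.mem_range.mp hb
      simp [show e ≠ b by omega]

lemma aP_eval (m : ℕ) (t : ℝ) : t * (aP m).eval t = (t+1)^m - 1 := by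
  rw [aP, eval_finset_sum]
  simp only [eval_mul, eval_C, eval_pow, eval_X]
  rw [Finset.mul_sum, add_pow]
  simp only [one_pow, mul_one]
  rw [Finset.sum_range_succ' (fun k => t^k * (m.choose k : ℝ)) m]
  simp only [pow_zero, Nat.choose_zero_right, Nat.cast_one, one_mul]
  rw [add_sub_cancel_right]
  refine Finset.sum_congr rfl fun d hd => ?_
  ring


noncomputable def Sps (i : ℕ) : PowerSeries ℝ := PowerSeries.mk (fun d => (carP d).eval (i:ℝ))

lemma aP_mul_Sps (i : ℕ) :
    ((aP (i+1) : Polynomial ℝ) : PowerSeries ℝ) * Sps i = PowerSeries.C ((i:ℝ)+1) := by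
  ext d
  rw [PowerSeries.coeff_mul, Finset.Nat.sum_antidiagonal_eq_sum_range_succ_mk]
  have : ∀ k ∈ Finset.range (d+1),
      (PowerSeries.coeff (k, d-k).1) ((aP (i+1) : Polynomial ℝ) : PowerSeries ℝ)
        * (PowerSeries.coeff (k, d-k).2) (Sps i)
      = (((i+1).choose (k+1) : ℝ)) * (carP (d-k)).eval (i:ℝ) := by
    intro k hk
    rw [Polynomial.coeff_coe, aP_coeff, Sps, PowerSeries.coeff_mk]
  rw [Finset.sum_congr rfl this, carP_conv, PowerSeries.coeff_C]

noncomputable def DP (n : ℕ) : Polynomial ℝ :=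
  ∑ i ∈ Finset.range (n+1), Polynomial.C ((-1:ℝ)^i * (n.choose i : ℝ) * ((i:ℝ)+1))
    * ∏ j ∈ (Finset.range (n+1)).erase i, aP (j+1)

lemma DP_coe (n : ℕ) : ((DP n : Polynomial ℝ) : PowerSeries ℝ)
    = (∑ i ∈ Finset.range (n+1), PowerSeries.C ((-1:ℝ)^i * (n.choose i : ℝ)) * Sps i)
      * ((∏ j ∈ Finset.range (n+1), aP (j+1) : Polynomial ℝ) : PowerSeries ℝ) := by
  rw [Finset.sum_mul, DP]
  have h1 : ((∑ i ∈ Finset.range (n+1), Polynomial.C ((-1:ℝ)^i * (n.choose i : ℝ) * ((i:ℝ)+1))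
      * ∏ j ∈ (Finset.range (n+1)).erase i, aP (j+1) : Polynomial ℝ) : PowerSeries ℝ)
      = ∑ i ∈ Finset.range (n+1), ((Polynomial.C ((-1:ℝ)^i * (n.choose i : ℝ) * ((i:ℝ)+1))
      * ∏ j ∈ (Finset.range (n+1)).erase i, aP (j+1) : Polynomial ℝ) : PowerSeries ℝ) := by
    simpa only [Polynomial.coeToPowerSeries.ringHom_apply] using map_sum (Polynomial.coeToPowerSeries.ringHom (R := ℝ))
      (fun i => Polynomial.C ((-1:ℝ)^i * (n.choose i : ℝ) * ((i:ℝ)+1))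
      * ∏ j ∈ (Finset.range (n+1)).erase i, aP (j+1)) (Finset.range (n+1))
  rw [h1]
  refine Finset.sum_congr rfl fun i hi => ?_
  have hprod : (∏ j ∈ Finset.range (n+1), aP (j+1) : Polynomial ℝ)
      = aP (i+1) * ∏ j ∈ (Finset.range (n+1)).erase i, aP (j+1) :=
    (Finset.mul_prod_erase _ _ hi).symm
  rw [hprod, Polynomial.coe_mul, Polynomial.coe_mul, Polynomial.coe_C]
  rw [show (PowerSeries.C) ((-1:ℝ)^i * (n.choose i : ℝ)) * Sps i
      * (((aP (i+1) : Polynomial ℝ) : PowerSeries ℝ) * ((∏ j ∈ (Finset.range (n+1)).erase i, aP (j+1) : Polynomial ℝ) : PowerSeries ℝ))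
      = (PowerSeries.C) ((-1:ℝ)^i * (n.choose i : ℝ)) * (((aP (i+1) : Polynomial ℝ) : PowerSeries ℝ) * Sps i)
      * ((∏ j ∈ (Finset.range (n+1)).erase i, aP (j+1) : Polynomial ℝ) : PowerSeries ℝ) by ring]
  rw [aP_mul_Sps, ← map_mul]

lemma DP_dvd (n : ℕ) : (X : Polynomial ℝ)^n ∣ DP n := by
  rw [Polynomial.X_pow_dvd_iff]
  intro d hd
  have hc : (DP n).coeff d = (PowerSeries.coeff d) ((DP n : Polynomial ℝ) : PowerSeries ℝ) := by
    rw [Polynomial.coeff_coe]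
  rw [hc, DP_coe, PowerSeries.coeff_mul, Finset.Nat.sum_antidiagonal_eq_sum_range_succ_mk]
  refine Finset.sum_eq_zero fun k hk => ?_
  have hk' : k < d + 1 := Finset.mem_range.mp hk
  have : (PowerSeries.coeff (k, d-k).1)
      (∑ i ∈ Finset.range (n+1), PowerSeries.C ((-1:ℝ)^i * (n.choose i : ℝ)) * Sps i) = 0 := by
    rw [map_sum]
    rw [Finset.sum_congr rfl (fun i _ => PowerSeries.coeff_C_mul _ _ _)]
    simp only [Sps, PowerSeries.coeff_mk]
    exact alt_sum_poly n (carP k) (lt_of_le_of_lt (carP_natDegree k) (by omega))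
  rw [this, zero_mul]


lemma aP_eval_ne (m : ℕ) (hm : 1 ≤ m) {q : ℝ} (hq0 : 0 < q) (hq1 : q < 1) :
    (aP m).eval (q-1) ≠ 0 := by
  intro h
  have h2 := aP_eval m (q-1)
  have e : q - 1 + 1 = q := by ring
  rw [h, mul_zero, e] at h2
  have : q^m < 1 := pow_lt_one₀ (le_of_lt hq0) hq1 (by omega)
  linarith

lemma binom2 (u : ℝ) (m i : ℕ) (him : i ≤ m) :
    ∑ k ∈ Finset.range (m+1), (m.choose k : ℝ) * (k.choose i : ℝ) * u^k
      = (m.choose i : ℝ) * u^i * (1+u)^(m-i) := by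
  have hsub : Finset.Ico i (m+1) ⊆ Finset.range (m+1) := by
    rw [Finset.range_eq_Ico]; exact Finset.Ico_subset_Ico (by omega) le_rfl
  rw [← Finset.sum_subset hsub (fun k hk hk2 => ?_)]
  · rw [Finset.sum_Ico_eq_sum_range]
    have e1 : ∀ j ∈ Finset.range (m+1-i),
        (m.choose (i+j) : ℝ) * ((i+j).choose i : ℝ) * u^(i+j)
        = ((m.choose i : ℝ) * u^i) * (((m-i).choose j : ℝ) * u^j) := by
      intro j hj
      have hj' : j ≤ m - i := by have := Finset.mem_range.mp hj; omega
      have hc := Nat.choose_mul (n := m) (k := i+j) (s := i) (by omega)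
      have hc' : ((m.choose (i+j) : ℝ)) * (((i+j).choose i : ℝ))
          = (m.choose i : ℝ) * ((m-i).choose (i+j-i) : ℝ) := by exact_mod_cast congrArg Nat.cast hc
      rw [show i+j-i = j by omega] at hc'
      rw [pow_add, show (m.choose (i+j) : ℝ) * ((i+j).choose i : ℝ) * (u^i*u^j)
          = ((m.choose (i+j) : ℝ)) * (((i+j).choose i : ℝ)) * u^i * u^j by ring, hc']
      ring
    rw [Finset.sum_congr rfl e1, ← Finset.mul_sum]
    have : (1+u)^(m-i) = ∑ j ∈ Finset.range (m-i+1), ((m-i).choose j : ℝ) * u^j := by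
      rw [add_comm 1 u, add_pow]
      refine Finset.sum_congr rfl fun j hj => ?_
      simp [mul_comm]
    rw [show m+1-i = m-i+1 by omega, ← this]
  · have hki : k < i := by
      have h1 := Finset.mem_range.mp hk
      rw [Finset.mem_Ico] at hk2
      omega
    rw [Nat.choose_eq_zero_of_lt hki]
    simp


noncomputable def HP (n : ℕ) : Polynomial ℝ := Classical.choose (DP_dvd n)
lemma HP_spec (n : ℕ) : DP n = X^n * HP n := Classical.choose_spec (DP_dvd n)

noncomputable def Gfun (q : ℝ) (k : ℕ) : ℝ :=
  (-1:ℝ)^k * (HP k).eval (q-1) / ∏ j ∈ Finset.range (k+1), (aP (j+1)).eval (q-1)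

lemma G_eq_S (k : ℕ) {q : ℝ} (hq0 : 0 < q) (hq1 : q < 1) :
    Gfun q k = (∑ i ∈ Finset.range (k+1),
      (-1:ℝ)^i * (k.choose i : ℝ) * ((i:ℝ)+1) / (aP (i+1)).eval (q-1)) / (1-q)^k := by
  have ht : q - 1 ≠ 0 := by intro h; apply absurd hq1; intro _; nlinarith [h]
  have h1q : (1:ℝ) - q ≠ 0 := by intro h; apply ht; linarith
  set t := q - 1 with htdef
  have hvne : ∀ j : ℕ, (aP (j+1)).eval t ≠ 0 := fun j => aP_eval_ne (j+1) (by omega) hq0 hq1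
  set Pd := ∏ j ∈ Finset.range (k+1), (aP (j+1)).eval t with hPddef
  have hPd : Pd ≠ 0 := Finset.prod_ne_zero_iff.mpr (fun j _ => hvne j)
  set Ssum := ∑ i ∈ Finset.range (k+1),
      (-1:ℝ)^i * (k.choose i : ℝ) * ((i:ℝ)+1) / (aP (i+1)).eval t with hSdef
  have hDPeval : (DP k).eval t = ∑ i ∈ Finset.range (k+1),
      ((-1:ℝ)^i * (k.choose i : ℝ) * ((i:ℝ)+1)) * ∏ j ∈ (Finset.range (k+1)).erase i, (aP (j+1)).eval t := by
    rw [DP, eval_finset_sum]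
    refine Finset.sum_congr rfl fun i hi => ?_
    rw [eval_mul, eval_C, eval_prod]
  have hterm : ∀ i ∈ Finset.range (k+1),
      ((-1:ℝ)^i * (k.choose i : ℝ) * ((i:ℝ)+1)) * ∏ j ∈ (Finset.range (k+1)).erase i, (aP (j+1)).eval t
      = ((-1:ℝ)^i * (k.choose i : ℝ) * ((i:ℝ)+1) / (aP (i+1)).eval t) * Pd := by
    intro i hi
    rw [hPddef, ← Finset.mul_prod_erase _ (fun j => (aP (j+1)).eval t) hi]
    rw [div_mul_eq_mul_div, mul_comm ((aP (i+1)).eval t), ← mul_assoc, mul_div_assoc,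
        div_self (hvne i), mul_one]
  have hkey : t^k * (HP k).eval t = Ssum * Pd := by
    have h2 : (DP k).eval t = Ssum * Pd := by
      rw [hDPeval, Finset.sum_congr rfl hterm, ← Finset.sum_mul]
    rw [← h2, HP_spec]; simp
  have hq1k : (1-q)^k = (-1:ℝ)^k * t^k := by
    rw [show (1:ℝ)-q = -t by ring, neg_pow]
  rw [Gfun, div_eq_div_iff hPd (pow_ne_zero _ h1q), hq1k]
  have hsq : ((-1:ℝ)^k) * ((-1:ℝ)^k) = 1 := by
    rw [← pow_add, Even.neg_one_pow ⟨k, rfl⟩]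
  calc (-1:ℝ)^k * (HP k).eval t * ((-1:ℝ)^k * t^k)
      = ((-1:ℝ)^k * (-1:ℝ)^k) * (t^k * (HP k).eval t) := by ring
    _ = t^k * (HP k).eval t := by rw [hsq, one_mul]
    _ = Ssum * Pd := hkey


lemma G_row (m : ℕ) (hm : 1 ≤ m) {q : ℝ} (hq0 : 0 < q) (hq1 : q < 1) :
    q * ∑ k ∈ Finset.range (m+1), (m.choose k : ℝ) * q^k * Gfun q k - Gfun q m
      = if m = 1 then 1 else 0 := by
  have h1q : (0:ℝ) < 1 - q := by linarith
  have h1q' : (1:ℝ) - q ≠ 0 := ne_of_gt h1q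
  set t := q - 1 with htdef
  have ht : t ≠ 0 := by rw [htdef]; intro h; apply h1q'; linarith
  have hvne : ∀ j : ℕ, (aP (j+1)).eval t ≠ 0 := fun j => aP_eval_ne (j+1) (by omega) hq0 hq1
  have hvmul : ∀ j : ℕ, t * (aP (j+1)).eval t = q^(j+1) - 1 := by
    intro j
    rw [aP_eval, show t+1 = q by rw [htdef]; ring]
  set u := q / (1-q) with hudef
  have hu1 : 1 + u = 1/(1-q) := by rw [hudef]; field_simp; ring
  -- step 1: rewrite each G
  have step1 : ∀ k ∈ Finset.range (m+1),
      (m.choose k : ℝ) * q^k * Gfun q k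
      = ∑ i ∈ Finset.range (m+1),
          (m.choose k : ℝ) * (k.choose i : ℝ) * u^k * ((-1:ℝ)^i * ((i:ℝ)+1) / (aP (i+1)).eval t) := by
    intro k hk
    have hkm : k ≤ m := by have := Finset.mem_range.mp hk; omega
    rw [G_eq_S k hq0 hq1]
    have hqk : q^k / (1-q)^k = u^k := by rw [hudef, div_pow]
    -- extend sum from range (k+1) to range (m+1)
    have hext : ∑ i ∈ Finset.range (k+1),
        (-1:ℝ)^i * (k.choose i : ℝ) * ((i:ℝ)+1) / (aP (i+1)).eval t
        = ∑ i ∈ Finset.range (m+1),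
        (-1:ℝ)^i * (k.choose i : ℝ) * ((i:ℝ)+1) / (aP (i+1)).eval t := by
      refine Finset.sum_subset (by intro x hx; simp at hx ⊢; omega) ?_
      intro i hi hi2
      have : k < i := by simp at hi hi2; omega
      rw [Nat.choose_eq_zero_of_lt this]
      simp
    rw [hext, Finset.sum_div, Finset.mul_sum]
    refine Finset.sum_congr rfl fun i hi => ?_
    rw [← hqk]
    field_simp
  rw [Finset.sum_congr rfl step1]
  -- swap sums
  rw [Finset.sum_comm]
  -- inner sums via binom2
  have step2 : ∀ i ∈ Finset.range (m+1),
      ∑ k ∈ Finset.range (m+1),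
        (m.choose k : ℝ) * (k.choose i : ℝ) * u^k * ((-1:ℝ)^i * ((i:ℝ)+1) / (aP (i+1)).eval t)
      = ((m.choose i : ℝ) * (q^i / (1-q)^m)) * ((-1:ℝ)^i * ((i:ℝ)+1) / (aP (i+1)).eval t) := by
    intro i hi
    have him : i ≤ m := by have := Finset.mem_range.mp hi; omega
    rw [← Finset.sum_mul, binom2 u m i him]
    congr 1
    rw [hu1, hudef, div_pow, div_pow, one_pow, mul_assoc, div_mul_div_comm, mul_one,
      ← pow_add, show i + (m - i) = m by omega]
  rw [Finset.sum_congr rfl step2]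
  -- now combine with G m
  rw [G_eq_S m hq0 hq1]
  rw [Finset.mul_sum, Finset.sum_div, ← Finset.sum_sub_distrib]
  have step3 : ∀ i ∈ Finset.range (m+1),
      q * ((m.choose i : ℝ) * (q^i / (1-q)^m) * ((-1:ℝ)^i * ((i:ℝ)+1) / (aP (i+1)).eval t))
      - (-1:ℝ)^i * (m.choose i : ℝ) * ((i:ℝ)+1) / (aP (i+1)).eval t / (1-q)^m
      = ((-1:ℝ)^i * (m.choose i : ℝ) * ((i:ℝ)+1)) * (t / (1-q)^m) := by
    intro i hi
    have hv := hvne i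
    have hmul := hvmul i
    have hpow : (1-q)^m ≠ 0 := pow_ne_zero _ h1q'
    have key : (q^(i+1) - 1) / (aP (i+1)).eval t = t := by
      rw [← hmul]; exact mul_div_cancel_right₀ t hv
    calc q * ((m.choose i : ℝ) * (q^i/(1-q)^m) * ((-1:ℝ)^i * ((i:ℝ)+1) / (aP (i+1)).eval t))
        - (-1:ℝ)^i * (m.choose i : ℝ) * ((i:ℝ)+1) / (aP (i+1)).eval t / (1-q)^m
        = ((-1:ℝ)^i * (m.choose i : ℝ) * ((i:ℝ)+1)) * ((q^(i+1) - 1) / (aP (i+1)).eval t) / (1-q)^m := by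
          rw [pow_succ]
          field_simp
      _ = ((-1:ℝ)^i * (m.choose i : ℝ) * ((i:ℝ)+1)) * (t / (1-q)^m) := by rw [key]; ring
  rw [Finset.sum_congr rfl step3, ← Finset.sum_mul]
  by_cases hm1 : m = 1
  · subst hm1
    rw [if_pos rfl]
    rw [show Finset.range 2 = {0, 1} by rfl]
    rw [Finset.sum_insert (by simp), Finset.sum_singleton]
    norm_num
    rw [htdef]
    field_simp
    ring
  · rw [if_neg hm1]
    have hW : ∑ i ∈ Finset.range (m+1), (-1:ℝ)^i * (m.choose i : ℝ) * ((i:ℝ)+1) = 0 := by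
      have := alt_sum_poly m (X + 1) (by
        have : (X + 1 : Polynomial ℝ).natDegree = 1 := by simpa using natDegree_X_add_C (1:ℝ)
        omega)
      simpa using this
    rw [hW, zero_mul]


/-- The Carlitz recurrence: `β 0 = 1` and
`q·∑_{k=0}^{n} C(n,k) q^k β k − β n = δ_{n,1}` for `n ≥ 1`. -/
def IsCarlitz (q : ℝ) (β : ℕ → ℝ) : Prop :=
  β 0 = 1 ∧ ∀ n : ℕ, 1 ≤ n →
    q * ∑ k ∈ Finset.range (n + 1), (n.choose k : ℝ) * q ^ k * β k - β n =
      if n = 1 then 1 else 0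

lemma G_zero {q : ℝ} (hq0 : 0 < q) (hq1 : q < 1) : Gfun q 0 = 1 := by
  rw [G_eq_S 0 hq0 hq1]
  have : (aP 1).eval (q-1) = 1 := by
    simp [aP]
  simp [this]

lemma G_isCarlitz {q : ℝ} (hq0 : 0 < q) (hq1 : q < 1) : IsCarlitz q (Gfun q) :=
  ⟨G_zero hq0 hq1, fun m hm => G_row m hm hq0 hq1⟩

lemma carlitz_unique {q : ℝ} (hq0 : 0 < q) (hq1 : q < 1) (b c : ℕ → ℝ)
    (hb : IsCarlitz q b) (hc : IsCarlitz q c) : ∀ n, b n = c n := by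
  intro n
  induction n using Nat.strong_induction_on with
  | _ n ih =>
    match n with
    | 0 => rw [hb.1, hc.1]
    | (n+1) =>
      have hbr := hb.2 (n+1) (by omega)
      have hcr := hc.2 (n+1) (by omega)
      rw [Finset.sum_range_succ] at hbr hcr
      simp only [Nat.choose_self, Nat.cast_one, one_mul] at hbr hcr
      have hsum : ∑ k ∈ Finset.range (n+1), ((n+1).choose k : ℝ) * q^k * b k
          = ∑ k ∈ Finset.range (n+1), ((n+1).choose k : ℝ) * q^k * c k :=
        Finset.sum_congr rfl fun k hk => by
          rw [ih k (by have := Finset.mem_range.mp hk; omega)]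
      have hfac : (q * q^(n+1) - 1) * (b (n+1) - c (n+1)) = 0 := by
        linear_combination hbr - hcr - q * hsum
      have hne : q * q^(n+1) - 1 ≠ 0 := by
        have h2 : q^(n+2) < 1 := pow_lt_one₀ (le_of_lt hq0) hq1 (by omega)
        rw [show q * q^(n+1) = q^(n+2) by ring]
        intro h; rw [sub_eq_zero] at h; rw [h] at h2; linarith
      have := (mul_eq_zero.mp hfac).resolve_left hne
      linarith [sub_eq_zero.mp this]

lemma G_tendsto (k : ℕ) :
    Filter.Tendsto (fun q : ℝ => Gfun q k) (nhdsWithin 1 (Set.Ioo (0:ℝ) 1))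
      (nhds (Gfun 1 k)) := by
  have hc : ContinuousAt (fun q : ℝ => Gfun q k) 1 := by
    have hnum : Continuous (fun q : ℝ => (-1:ℝ)^k * (HP k).eval (q-1)) :=
      continuous_const.mul ((HP k).continuous.comp (continuous_id.sub continuous_const))
    have hden : Continuous (fun q : ℝ => ∏ j ∈ Finset.range (k+1), (aP (j+1)).eval (q-1)) := by
      apply continuous_finset_prod
      intro j _
      exact (aP (j+1)).continuous.comp (continuous_id.sub continuous_const)
    have hden1 : (∏ j ∈ Finset.range (k+1), (aP (j+1)).eval ((1:ℝ)-1)) ≠ 0 := by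
      have : ∀ j ∈ Finset.range (k+1), (aP (j+1)).eval ((1:ℝ)-1) = ((j:ℝ)+1) := by
        intro j _
        rw [show (1:ℝ)-1 = 0 by ring, ← Polynomial.coeff_zero_eq_eval_zero, aP_coeff]
        simp
      rw [Finset.prod_congr rfl this]
      refine ne_of_gt (Finset.prod_pos fun j _ => by positivity)
    exact ContinuousAt.div (hnum.continuousAt) (hden.continuousAt) hden1
  exact hc.continuousWithinAt.tendsto

lemma neBot_filter : (nhdsWithin (1:ℝ) (Set.Ioo (0:ℝ) 1)).NeBot := by
  apply mem_closure_iff_nhdsWithin_neBot.mp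
  rw [closure_Ioo (by norm_num : (0:ℝ) ≠ 1)]
  exact Set.right_mem_Icc.mpr (by norm_num)

lemma L_row (m : ℕ) (hm : 1 ≤ m) :
    ∑ k ∈ Finset.range (m+1), (m.choose k : ℝ) * Gfun 1 k - Gfun 1 m
      = if m = 1 then 1 else 0 := by
  have hNe := neBot_filter
  have hq : Filter.Tendsto (fun q : ℝ => q) (nhdsWithin 1 (Set.Ioo (0:ℝ) 1)) (nhds 1) :=
    Filter.tendsto_id.mono_left nhdsWithin_le_nhds
  have h1 : Filter.Tendsto
      (fun q : ℝ => q * ∑ k ∈ Finset.range (m+1), (m.choose k : ℝ) * q^k * Gfun q k - Gfun q m)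
      (nhdsWithin 1 (Set.Ioo (0:ℝ) 1))
      (nhds (1 * ∑ k ∈ Finset.range (m+1), (m.choose k : ℝ) * 1^k * Gfun 1 k - Gfun 1 m)) := by
    refine Filter.Tendsto.sub ?_ (G_tendsto m)
    refine hq.mul (tendsto_finset_sum _ fun k _ => ?_)
    exact (tendsto_const_nhds.mul (hq.pow k)).mul (G_tendsto k)
  have h2 : (fun q : ℝ => q * ∑ k ∈ Finset.range (m+1), (m.choose k : ℝ) * q^k * Gfun q k - Gfun q m)
      =ᶠ[nhdsWithin 1 (Set.Ioo (0:ℝ) 1)] (fun _ => if m = 1 then (1:ℝ) else 0) := by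
    filter_upwards [self_mem_nhdsWithin] with q hqm
    exact G_row m hm hqm.1 hqm.2
  have h4 := tendsto_nhds_unique (h1.congr' h2) tendsto_const_nhds
  rw [← h4]
  simp

lemma L_zero : Gfun 1 0 = 1 := by
  have hNe := neBot_filter
  have h2 : (fun q : ℝ => Gfun q 0) =ᶠ[nhdsWithin 1 (Set.Ioo (0:ℝ) 1)] (fun _ => (1:ℝ)) := by
    filter_upwards [self_mem_nhdsWithin] with q hqm
    exact G_zero hqm.1 hqm.2
  exact tendsto_nhds_unique ((G_tendsto 0).congr' h2) tendsto_const_nhds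

theorem carlitz_tendsto_bernoulli
    (β : ℝ → ℕ → ℝ) (hβ : ∀ q : ℝ, 0 < q → q < 1 → IsCarlitz q (β q))
    (B : ℕ → ℝ) (hB0 : B 0 = 1)
    (hBrec : ∀ n : ℕ, 1 ≤ n → ∑ k ∈ Finset.range (n + 1), ((n + 1).choose k : ℝ) * B k = 0)
    (n : ℕ) :
    Filter.Tendsto (fun q : ℝ => β q n) (nhdsWithin 1 (Set.Ioo (0 : ℝ) 1)) (nhds (B n)) := by
  have hLB : ∀ m : ℕ, Gfun 1 m = B m := by
    intro m
    induction m using Nat.strong_induction_on with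
    | _ m ih =>
      match m with
      | 0 => rw [L_zero, hB0]
      | (m+1) =>
        have hrow := L_row (m+2) (by omega)
        rw [if_neg (by omega), Finset.sum_range_succ, Nat.choose_self] at hrow
        have hrow2 : ∑ k ∈ Finset.range (m+2), ((m+2).choose k : ℝ) * Gfun 1 k = 0 := by
          push_cast at hrow ⊢
          linarith
        rw [Finset.sum_range_succ] at hrow2
        have hsum : ∑ k ∈ Finset.range (m+1), ((m+2).choose k : ℝ) * Gfun 1 k
            = ∑ k ∈ Finset.range (m+1), ((m+2).choose k : ℝ) * B k :=
          Finset.sum_congr rfl fun k hk => by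
            rw [ih k (by have := Finset.mem_range.mp hk; omega)]
        have hB := hBrec (m+1) (by omega)
        rw [Finset.sum_range_succ] at hB
        have hch : (((m+2)).choose (m+1) : ℝ) = (m:ℝ)+2 := by
          rw [show (m+2) = (m+1)+1 by ring, Nat.choose_succ_self_right]
          push_cast; ring
        rw [hsum, hch] at hrow2
        rw [show ((m+1+1) : ℕ) = m+2 by ring] at hB
        rw [hch] at hB
        have : ((m:ℝ)+2) * Gfun 1 (m+1) = ((m:ℝ)+2) * B (m+1) := by linarith
        have hm2 : ((m:ℝ)+2) ≠ 0 := by positivity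
        exact mul_left_cancel₀ hm2 this
  have hev : (fun q : ℝ => Gfun q n) =ᶠ[nhdsWithin 1 (Set.Ioo (0:ℝ) 1)]
      (fun q : ℝ => β q n) := by
    filter_upwards [self_mem_nhdsWithin] with q hqm
    exact carlitz_unique hqm.1 hqm.2 (Gfun q) (β q) (G_isCarlitz hqm.1 hqm.2)
      (hβ q hqm.1 hqm.2) n
  have := (G_tendsto n).congr' hev
  rwa [hLB n] at this
end
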